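/- If a smooth function φ(i, n, u) on ℤ² × ℝ satisfies φ(i+1, n+1, u + 1/(w − v)) = φ(i, n, u) + (φ(i, n+1, v) − φ(i+1, n, w))/(w − v)² for all u, v, w ∈ ℝ with w ≠ v, then φ'' (second derivative in u) vanishes identically, so φ is affine in u: φ(i, n, u) = α(i,n)·u + β(i,n). -/

import Mathlib

private lemma affine_of_rel
    (φ : ℤ → ℤ → ℝ → ℝ)
    (hφ : ∀ i n : ℤ, ContDiff ℝ 2 (φ i n))
    (heq : ∀ (i n : ℤ) (u v w : ℝ), w ≠ v →
      φ (i + 1) (n + 1) (u + 1 / (w - v))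
        = φ i n u + (φ i (n + 1) v - φ (i + 1) n w) / (w - v) ^ 2) :
    ∀ i n : ℤ, ∃ α β : ℝ, ∀ x : ℝ, φ i n x = α * x + β := by
  have main : ∀ i n : ℤ, ∃ α β : ℝ, ∀ x : ℝ,
      φ (i + 1) (n + 1) x = α * x + β := by
    intro i n
    set ψ : ℝ → ℝ := φ (i + 1) (n + 1) with hψdef
    set χ : ℝ → ℝ := φ i n with hχdef
    -- difference relation
    have hdiff : ∀ a : ℝ, a ≠ 0 → ∀ u u' : ℝ,
        ψ (u + a) - ψ (u' + a) = χ u - χ u' := by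
      intro a ha u u'
      have hw : (1 / a : ℝ) ≠ (0 : ℝ) := one_div_ne_zero ha
      have h1 := heq i n u 0 (1 / a) hw
      have h2 := heq i n u' 0 (1 / a) hw
      rw [sub_zero] at h1 h2
      rw [one_div_one_div] at h1 h2
      simp only [hψdef, hχdef]
      rw [h1, h2]; ring
    -- translation invariance of differences
    have hshift : ∀ x y s : ℝ, ψ (x + s) - ψ (y + s) = ψ x - ψ y := by
      intro x y s
      obtain ⟨a, ha, has⟩ : ∃ a : ℝ, a ≠ 0 ∧ a + s ≠ 0 := by
        by_cases h : s = -1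
        · exact ⟨2, by norm_num, by rw [h]; norm_num⟩
        · exact ⟨1, one_ne_zero, by
            intro hc
            apply h
            linarith⟩
      have e1 := hdiff a ha (x - a) (y - a)
      have e2 := hdiff (a + s) has (x - a) (y - a)
      have r1 : x - a + a = x := by ring
      have r2 : y - a + a = y := by ring
      have r3 : x - a + (a + s) = x + s := by ring
      have r4 : y - a + (a + s) = y + s := by ring
      rw [r1, r2] at e1
      rw [r3, r4] at e2
      rw [e1, e2]
    have hK : ∀ y x : ℝ, ψ y = ψ (y - x) + ψ x - ψ 0 := by
      intro y x
      have := hshift (y - x) 0 x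
      have r : y - x + x = y := by ring
      rw [r, zero_add] at this
      linarith
    have hψd : Differentiable ℝ ψ :=
      (hφ (i + 1) (n + 1)).differentiable (by norm_num)
    have hc : ∀ x : ℝ, deriv ψ x = deriv ψ 0 := by
      intro x
      have hfun : ψ = fun y => ψ (y - x) + (ψ x - ψ 0) := by
        funext y
        have := hK y x
        linarith
      conv_lhs => rw [hfun]
      rw [deriv_add_const, deriv_comp_sub_const]
      simp
    set α : ℝ := deriv ψ 0 with hα
    have hgd : Differentiable ℝ (fun y : ℝ => ψ y - α * y) :=
      hψd.sub ((differentiable_fun_id.const_mul α))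
    have h0 : ∀ x : ℝ, deriv (fun y : ℝ => ψ y - α * y) x = 0 := by
      intro x
      rw [deriv_fun_sub (hψd x) ((differentiable_fun_id.const_mul α) x)]
      have : deriv (fun y : ℝ => α * y) x = α := by
        simpa using ((hasDerivAt_id x).const_mul α).deriv
      rw [this, hc x]
      ring
    have hconst := is_const_of_deriv_eq_zero hgd h0
    refine ⟨α, ψ 0, fun x => ?_⟩
    have := hconst x 0
    simp at this
    linarith
  intro i n
  obtain ⟨α, β, h⟩ := main (i - 1) (n - 1)
  refine ⟨α, β, fun x => ?_⟩
  have := h x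
  simpa using this

theorem dpkdv_symmetry_coefficient_affine
    (φ : ℤ → ℤ → ℝ → ℝ)
    (hφ : ∀ i n : ℤ, ContDiff ℝ 2 (φ i n))
    (heq : ∀ (i n : ℤ) (u v w : ℝ), w ≠ v →
      φ (i + 1) (n + 1) (u + 1 / (w - v))
        = φ i n u + (φ i (n + 1) v - φ (i + 1) n w) / (w - v) ^ 2) :
    (∀ (i n : ℤ) (u : ℝ), iteratedDeriv 2 (φ i n) u = 0) ∧
    ∃ α β : ℤ → ℤ → ℝ, ∀ (i n : ℤ) (u : ℝ), φ i n u = α i n * u + β i n := by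
  have key := affine_of_rel φ hφ heq
  choose α β h using key
  constructor
  · intro i n u
    have hfun : φ i n = fun x => α i n * x + β i n := funext (h i n)
    rw [hfun]
    have h1 : deriv (fun x : ℝ => α i n * x + β i n) = fun _ => α i n := by
      funext x
      rw [deriv_add_const]
      simpa using ((hasDerivAt_id x).const_mul (α i n)).deriv
    rw [show (2 : ℕ) = 1 + 1 from rfl, iteratedDeriv_succ, iteratedDeriv_one, h1]
    exact deriv_const u _
  · exact ⟨α, β, h⟩
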